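/- For every ρ ∈ (−1,1), the bivariate Gaussian copula C_ρ is asymptotically independent in the upper tail: its upper tail dependence coefficient λ_u := lim_{q → 1⁻} (1 − 2q + C_ρ(q,q)) / (1 − q) exists and equals 0. Equivalently, lim_{x → ∞} 2 ( 1 − Φ( x √(1−ρ)/√(1+ρ) ) ) = 0. -/

import Mathlib

open MeasureTheory Set Filter Real

noncomputable def stdPdf (t : ℝ) : ℝ := (Real.sqrt (2 * π))⁻¹ * rexp (-(t ^ 2) / 2)

lemma stdPdf_eq (t : ℝ) : stdPdf t = (Real.sqrt (2 * π))⁻¹ * rexp (-(1/2) * t ^ 2) := by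
  unfold stdPdf; congr 2; ring

lemma stdPdf_nonneg (t : ℝ) : 0 ≤ stdPdf t := by
  unfold stdPdf; positivity

lemma continuous_stdPdf : Continuous stdPdf := by
  unfold stdPdf; fun_prop

lemma integrable_stdPdf : Integrable stdPdf := by
  rw [show stdPdf = fun t => (Real.sqrt (2 * π))⁻¹ * rexp (-(1/2) * t ^ 2) from funext stdPdf_eq]
  exact (integrable_exp_neg_mul_sq (by norm_num : (0:ℝ) < 1/2)).const_mul _

lemma sqrt_two_pi_sq : Real.sqrt (2 * π) * Real.sqrt (2 * π) = 2 * π :=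
  Real.mul_self_sqrt (by positivity)

lemma integral_stdPdf : ∫ t, stdPdf t = 1 := by
  simp_rw [stdPdf_eq]
  rw [integral_const_mul, integral_gaussian]
  have h : π / (1/2) = 2 * π := by ring
  have h2 : (0:ℝ) < Real.sqrt (2 * π) := Real.sqrt_pos.2 (by positivity)
  rw [h]
  field_simp

noncomputable def bvnPdf (ρ : ℝ) (p : ℝ × ℝ) : ℝ :=
  (2 * π * Real.sqrt (1 - ρ ^ 2))⁻¹ *
    rexp ((2 * ρ * p.1 * p.2 - p.1 ^ 2 - p.2 ^ 2) / (2 * (1 - ρ ^ 2)))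

lemma bvnPdf_nonneg (ρ : ℝ) (hρ : ρ ^ 2 < 1) (p : ℝ × ℝ) : 0 ≤ bvnPdf ρ p := by
  unfold bvnPdf
  have : (0:ℝ) < 1 - ρ ^ 2 := by nlinarith
  positivity

lemma continuous_bvnPdf (ρ : ℝ) : Continuous (bvnPdf ρ) := by
  unfold bvnPdf; fun_prop

lemma bvn_marginal {ρ : ℝ} (hρ : ρ ^ 2 < 1) (s : ℝ) :
    ∫ t, bvnPdf ρ (s, t) = stdPdf s := by
  have hσ : (0:ℝ) < 1 - ρ ^ 2 := by nlinarith
  have h1 : ∀ t, bvnPdf ρ (s, t)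
      = ((2 * π * Real.sqrt (1 - ρ ^ 2))⁻¹ * rexp (-(s ^ 2) / 2)) *
        rexp (-(1/(2 * (1 - ρ ^ 2))) * (t - ρ * s) ^ 2) := by
    intro t
    have e : (2 * ρ * s * t - s ^ 2 - t ^ 2) / (2 * (1 - ρ ^ 2))
        = -(s ^ 2) / 2 + (-(1/(2 * (1 - ρ ^ 2))) * (t - ρ * s) ^ 2) := by
      field_simp; ring
    unfold bvnPdf
    dsimp only
    rw [e, Real.exp_add]; ring
  simp_rw [h1]
  rw [integral_const_mul]
  have h2 : ∫ t : ℝ, rexp (-(1/(2 * (1 - ρ ^ 2))) * (t - ρ * s) ^ 2)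
      = Real.sqrt (π / (1/(2 * (1 - ρ ^ 2)))) := by
    rw [integral_sub_right_eq_self (fun t => rexp (-(1/(2 * (1 - ρ ^ 2))) * t ^ 2)) (ρ * s)]
    exact integral_gaussian _
  rw [h2]
  have h3 : π / (1/(2 * (1 - ρ ^ 2))) = (2 * π) * (1 - ρ ^ 2) := by field_simp
  rw [h3, Real.sqrt_mul (by positivity)]
  unfold stdPdf
  have h4 : (0:ℝ) < Real.sqrt (2 * π) := Real.sqrt_pos.2 (by positivity)
  have h5 : (0:ℝ) < Real.sqrt (1 - ρ ^ 2) := Real.sqrt_pos.2 hσ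
  set a := Real.sqrt (2 * π) with ha
  have h6 : a * a = 2 * π := sqrt_two_pi_sq
  rw [← h6]
  field_simp


lemma abs_lt_one_of_sq {ρ : ℝ} (hρ : ρ ^ 2 < 1) : |ρ| < 1 := by
  nlinarith [abs_nonneg ρ, sq_abs ρ]

lemma bvnPdf_le {ρ : ℝ} (hρ : ρ ^ 2 < 1) (p : ℝ × ℝ) :
    bvnPdf ρ p ≤ (2 * π * Real.sqrt (1 - ρ ^ 2))⁻¹ *
      (rexp (-(1/(2 * (1 + |ρ|))) * p.1 ^ 2) * rexp (-(1/(2 * (1 + |ρ|))) * p.2 ^ 2)) := by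
  have hσ : (0:ℝ) < 1 - ρ ^ 2 := by nlinarith
  have habs : |ρ| < 1 := abs_lt_one_of_sq hρ
  have habs0 : (0:ℝ) ≤ |ρ| := abs_nonneg ρ
  unfold bvnPdf
  rw [← Real.exp_add]
  refine mul_le_mul_of_nonneg_left ?_ (by positivity)
  refine Real.exp_le_exp.2 ?_
  have key : 2 * ρ * p.1 * p.2 ≤ |ρ| * (p.1 ^ 2 + p.2 ^ 2) := by
    nlinarith [le_abs_self (ρ * (p.1 * p.2)), abs_mul ρ (p.1 * p.2), abs_mul p.1 p.2,
      sq_nonneg (|p.1| - |p.2|), sq_abs p.1, sq_abs p.2]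
  have h2 : 2 * ρ * p.1 * p.2 - p.1 ^ 2 - p.2 ^ 2 ≤ -((1 - |ρ|) * (p.1 ^ 2 + p.2 ^ 2)) := by
    nlinarith [key]
  have e : (-((1 - |ρ|) * (p.1 ^ 2 + p.2 ^ 2))) / (2 * (1 - ρ ^ 2))
      = -(1/(2 * (1 + |ρ|))) * p.1 ^ 2 + -(1/(2 * (1 + |ρ|))) * p.2 ^ 2 := by
    have hfact : 1 - ρ ^ 2 = (1 - |ρ|) * (1 + |ρ|) := by
      rw [← sq_abs ρ]; ring
    rw [hfact]
    have h1 : (1:ℝ) - |ρ| ≠ 0 := by linarith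
    have h2 : (1:ℝ) + |ρ| ≠ 0 := by linarith
    field_simp
    ring
  calc (2 * ρ * p.1 * p.2 - p.1 ^ 2 - p.2 ^ 2) / (2 * (1 - ρ ^ 2))
      ≤ (-((1 - |ρ|) * (p.1 ^ 2 + p.2 ^ 2))) / (2 * (1 - ρ ^ 2)) := by
        exact div_le_div_of_nonneg_right h2 (by positivity)
    _ = _ := e

lemma integrable_bvnPdf {ρ : ℝ} (hρ : ρ ^ 2 < 1) : Integrable (bvnPdf ρ) := by
  have hσ : (0:ℝ) < 1 - ρ ^ 2 := by nlinarith
  have hb : (0:ℝ) < 1/(2 * (1 + |ρ|)) := by positivity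
  have hint : Integrable (fun p : ℝ × ℝ =>
      (2 * π * Real.sqrt (1 - ρ ^ 2))⁻¹ *
      (rexp (-(1/(2 * (1 + |ρ|))) * p.1 ^ 2) * rexp (-(1/(2 * (1 + |ρ|))) * p.2 ^ 2))) := by
    rw [Measure.volume_eq_prod]
    exact (((integrable_exp_neg_mul_sq hb).mul_prod (integrable_exp_neg_mul_sq hb)).const_mul _)
  refine hint.mono ((continuous_bvnPdf ρ).aestronglyMeasurable) ?_
  filter_upwards with p
  rw [Real.norm_eq_abs, Real.norm_eq_abs, abs_of_nonneg (bvnPdf_nonneg ρ hρ p),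
    abs_of_nonneg (by positivity)]
  exact bvnPdf_le hρ p


lemma bvn_total {ρ : ℝ} (hρ : ρ ^ 2 < 1) : ∫ p : ℝ × ℝ, bvnPdf ρ p = 1 := by
  have hI : Integrable (bvnPdf ρ) (volume.prod volume) := by
    rw [← Measure.volume_eq_prod]; exact integrable_bvnPdf hρ
  rw [Measure.volume_eq_prod, integral_prod _ hI]
  simp_rw [bvn_marginal hρ]
  exact integral_stdPdf

lemma bvn_left_marginal {ρ : ℝ} (hρ : ρ ^ 2 < 1) (x : ℝ) :
    ∫ p in Iic x ×ˢ (univ : Set ℝ), bvnPdf ρ p = ∫ t in Iic x, stdPdf t := by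
  have hI : Integrable (bvnPdf ρ) (volume.prod volume) := by
    rw [← Measure.volume_eq_prod]; exact integrable_bvnPdf hρ
  rw [Measure.volume_eq_prod, setIntegral_prod _ hI.integrableOn]
  simp_rw [Measure.restrict_univ, bvn_marginal hρ]

lemma bvn_swap {ρ : ℝ} (x : ℝ) :
    ∫ p in (univ : Set ℝ) ×ˢ Iic x, bvnPdf ρ p
      = ∫ p in Iic x ×ˢ (univ : Set ℝ), bvnPdf ρ p := by
  have hsym : ∀ z : ℝ × ℝ, bvnPdf ρ z.swap = bvnPdf ρ z := by
    intro z; unfold bvnPdf; dsimp [Prod.swap]; ring_nf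
  rw [Measure.volume_eq_prod, ← Measure.prod_restrict, ← Measure.prod_restrict,
    ← integral_prod_swap (bvnPdf ρ)]
  simp_rw [hsym]

lemma bvn_rect {ρ : ℝ} (hρ : ρ ^ 2 < 1) (x : ℝ) :
    ∫ p in Ioi x ×ˢ Ioi x, bvnPdf ρ p
      = 1 - (∫ t in Iic x, stdPdf t) - (∫ t in Iic x, stdPdf t)
        + ∫ p in Iic x ×ˢ Iic x, bvnPdf ρ p := by
  have hI := integrable_bvnPdf hρ
  have hIO : ∀ s t : Set ℝ, IntegrableOn (bvnPdf ρ) (s ×ˢ t) := fun s t => hI.integrableOn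
  have splitR : ∀ (s : Set ℝ), MeasurableSet s → ∫ p in s ×ˢ (univ : Set ℝ), bvnPdf ρ p
      = (∫ p in s ×ˢ Iic x, bvnPdf ρ p) + ∫ p in s ×ˢ Ioi x, bvnPdf ρ p := by
    intro s hs
    rw [show s ×ˢ (univ : Set ℝ) = s ×ˢ Iic x ∪ s ×ˢ Ioi x by rw [← prod_union, Iic_union_Ioi]]
    exact setIntegral_union (Set.disjoint_prod.2 (Or.inr (Iic_disjoint_Ioi le_rfl)))
      (hs.prod measurableSet_Ioi) (hIO _ _) (hIO _ _)
  have splitL : ∀ (t : Set ℝ) (ht : MeasurableSet t), ∫ p in (univ : Set ℝ) ×ˢ t, bvnPdf ρ p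
      = (∫ p in Iic x ×ˢ t, bvnPdf ρ p) + ∫ p in Ioi x ×ˢ t, bvnPdf ρ p := by
    intro t ht
    rw [show (univ : Set ℝ) ×ˢ t = Iic x ×ˢ t ∪ Ioi x ×ˢ t by rw [← union_prod, Iic_union_Ioi]]
    exact setIntegral_union (Set.disjoint_prod.2 (Or.inl (Iic_disjoint_Ioi le_rfl)))
      (measurableSet_Ioi.prod ht) (hIO _ _) (hIO _ _)
  have huniv : ∫ p in (univ : Set ℝ) ×ˢ (univ : Set ℝ), bvnPdf ρ p = 1 := by
    rw [univ_prod_univ, Measure.restrict_univ]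
    exact bvn_total hρ
  have h1 := bvn_left_marginal hρ x
  have h2 := splitL (univ : Set ℝ) MeasurableSet.univ
  have h3 := splitL (Iic x) measurableSet_Iic
  have h4 := splitR (Iic x) measurableSet_Iic
  have h5 := splitR (Ioi x) measurableSet_Ioi
  have h6 := bvn_swap (ρ := ρ) x
  linarith

lemma integral_exp_neg_mul_Ioi {c : ℝ} (a : ℝ) (hc : 0 < c) :
    ∫ t in Ioi a, rexp (-(c * t)) = c⁻¹ * rexp (-(c * a)) := by
  have h := integral_comp_mul_left_Ioi (fun u => rexp (-u)) a hc
  simp only [smul_eq_mul] at h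
  rw [integral_exp_neg_Ioi] at h
  exact h

lemma gauss_tail_upper {b x : ℝ} (hb : 0 < b) (hx : 0 < x) :
    ∫ t in Ioi x, rexp (-b * t ^ 2) ≤ (b * x)⁻¹ * rexp (-b * x ^ 2) := by
  have hbx : 0 < b * x := by positivity
  have h1 : ∫ t in Ioi x, rexp (-b * t ^ 2) ≤ ∫ t in Ioi x, rexp (-(b * x * t)) := by
    apply setIntegral_mono_on
    · exact (integrable_exp_neg_mul_sq hb).integrableOn
    · have hint : IntegrableOn (fun t => rexp (-(b * x * t))) (Ioi x) := by
        simpa [neg_mul] using exp_neg_integrableOn_Ioi x hbx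
      exact hint
    · exact measurableSet_Ioi
    · intro t ht
      have htx : x < t := mem_Ioi.1 ht
      refine Real.exp_le_exp.2 ?_
      nlinarith [mul_nonneg (mul_nonneg hb.le (sub_nonneg.2 htx.le)) (hx.trans htx).le]
  calc ∫ t in Ioi x, rexp (-b * t ^ 2) ≤ ∫ t in Ioi x, rexp (-(b * x * t)) := h1
    _ = (b * x)⁻¹ * rexp (-(b * x * x)) := integral_exp_neg_mul_Ioi x hbx
    _ = (b * x)⁻¹ * rexp (-b * x ^ 2) := by ring_nf

noncomputable def stdCdf (x : ℝ) : ℝ := ∫ t in Iic x, stdPdf t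

lemma stdCdf_add_tail (x : ℝ) : stdCdf x + ∫ t in Ioi x, stdPdf t = 1 := by
  unfold stdCdf
  rw [← setIntegral_union (Iic_disjoint_Ioi le_rfl) measurableSet_Ioi
    integrable_stdPdf.integrableOn integrable_stdPdf.integrableOn, Iic_union_Ioi,
    Measure.restrict_univ]
  exact integral_stdPdf

lemma stdCdf_mono : Monotone stdCdf := by
  intro a b hab
  exact setIntegral_mono_set integrable_stdPdf.integrableOn
    (Eventually.of_forall stdPdf_nonneg)
    (HasSubset.Subset.eventuallyLE (Iic_subset_Iic.2 hab))

lemma tail_lower (x : ℝ) (hx : 0 ≤ x) :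
    (Real.sqrt (2 * π))⁻¹ * rexp (-((x+1) ^ 2) / 2) ≤ ∫ t in Ioi x, stdPdf t := by
  have hsub : Ioc x (x+1) ⊆ Ioi x := Ioc_subset_Ioi_self
  have h2 : (Real.sqrt (2 * π))⁻¹ * rexp (-((x+1) ^ 2) / 2) ≤ ∫ t in Ioc x (x+1), stdPdf t := by
    have := setIntegral_ge_of_const_le (μ := volume) (s := Ioc x (x+1))
      (c := (Real.sqrt (2 * π))⁻¹ * rexp (-((x+1) ^ 2) / 2)) measurableSet_Ioc
      (by rw [Real.volume_Ioc]; exact ENNReal.ofReal_ne_top)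
      (fun t ht => by
        unfold stdPdf
        have h1 : x < t := ht.1
        have h2 : t ≤ x + 1 := ht.2
        refine mul_le_mul_of_nonneg_left (Real.exp_le_exp.2 (by nlinarith)) (by positivity))
      integrable_stdPdf.integrableOn
    rw [Real.volume_real_Ioc_of_le (by linarith), show x + 1 - x = 1 by ring,
      one_smul] at this
    exact this
  exact h2.trans (setIntegral_mono_set integrable_stdPdf.integrableOn
    (Eventually.of_forall stdPdf_nonneg) (HasSubset.Subset.eventuallyLE hsub))

lemma tail_nonneg (x : ℝ) : 0 ≤ ∫ t in Ioi x, stdPdf t :=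
  setIntegral_nonneg measurableSet_Ioi fun t _ => stdPdf_nonneg t

lemma tail_pos (x : ℝ) : 0 < ∫ t in Ioi x, stdPdf t := by
  have h1 : (Real.sqrt (2 * π))⁻¹ * rexp (-((max x 0 + 1) ^ 2) / 2)
      ≤ ∫ t in Ioi (max x 0), stdPdf t := tail_lower _ (le_max_right x 0)
  have h2 : ∫ t in Ioi (max x 0), stdPdf t ≤ ∫ t in Ioi x, stdPdf t :=
    setIntegral_mono_set integrable_stdPdf.integrableOn
      (Eventually.of_forall stdPdf_nonneg)
      (HasSubset.Subset.eventuallyLE (Ioi_subset_Ioi (le_max_left x 0)))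
  have h3 : (0:ℝ) < (Real.sqrt (2 * π))⁻¹ * rexp (-((max x 0 + 1) ^ 2) / 2) := by positivity
  linarith

lemma stdCdf_lt_one (x : ℝ) : stdCdf x < 1 := by
  have := stdCdf_add_tail x
  have := tail_pos x
  linarith

lemma one_sub_stdCdf (x : ℝ) : 1 - stdCdf x = ∫ t in Ioi x, stdPdf t := by
  have := stdCdf_add_tail x; linarith

lemma stdCdf_tendsto_one : Tendsto stdCdf atTop (nhds 1) := by
  have key : Tendsto (fun x => ∫ t in Ioi x, stdPdf t) atTop (nhds 0) := by
    have hub : ∀ᶠ x in atTop, ∫ t in Ioi x, stdPdf t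
        ≤ (Real.sqrt (2 * π))⁻¹ * (2 * x⁻¹) := by
      filter_upwards [eventually_gt_atTop 0] with x hx
      have h1 : ∫ t in Ioi x, stdPdf t
          = (Real.sqrt (2 * π))⁻¹ * ∫ t in Ioi x, rexp (-(1/2 : ℝ) * t ^ 2) := by
        rw [← integral_const_mul]
        exact setIntegral_congr_fun measurableSet_Ioi fun t _ => by
          rw [stdPdf_eq]
      rw [h1]
      refine mul_le_mul_of_nonneg_left ?_ (by positivity)
      calc ∫ t in Ioi x, rexp (-(1/2 : ℝ) * t ^ 2)
          ≤ ((1/2 : ℝ) * x)⁻¹ * rexp (-(1/2 : ℝ) * x ^ 2) :=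
            gauss_tail_upper (by norm_num) hx
        _ ≤ ((1/2 : ℝ) * x)⁻¹ * 1 := by
            refine mul_le_mul_of_nonneg_left ?_ (by positivity)
            exact Real.exp_le_one_iff.2 (by nlinarith)
        _ = 2 * x⁻¹ := by rw [mul_one]; rw [mul_inv]; norm_num
    have hlim : Tendsto (fun x : ℝ => (Real.sqrt (2 * π))⁻¹ * (2 * x⁻¹)) atTop (nhds 0) := by
      have := tendsto_inv_atTop_zero (𝕜 := ℝ)
      have h2 := this.const_mul (2:ℝ)
      have h3 := h2.const_mul ((Real.sqrt (2 * π))⁻¹)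
      simpa using h3
    exact tendsto_of_tendsto_of_tendsto_of_le_of_le' tendsto_const_nhds hlim
      (Eventually.of_forall tail_nonneg) hub
  have h4 : Tendsto (fun x => 1 - ∫ t in Ioi x, stdPdf t) atTop (nhds (1 - 0)) :=
    tendsto_const_nhds.sub key
  have h5 : Tendsto stdCdf atTop (nhds (1 - 0)) :=
    h4.congr (fun x => by have := stdCdf_add_tail x; linarith)
  simpa using h5

lemma main_ratio {ρ a K : ℝ} (hρsq : ρ ^ 2 < 1) (ha0 : 0 < a) (hK0 : 0 ≤ K)
    (hle : ∀ p : ℝ × ℝ, bvnPdf ρ p ≤ K * (rexp (-a * p.1 ^ 2) * rexp (-a * p.2 ^ 2)))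
    (haε : 1/2 < 2 * a) :
    Tendsto (fun x : ℝ =>
      (1 - 2 * stdCdf x + ∫ p in Iic x ×ˢ Iic x, bvnPdf ρ p) / (1 - stdCdf x))
      atTop (nhds 0) := by
  have hnum_eq : ∀ x : ℝ, 1 - 2 * stdCdf x + ∫ p in Iic x ×ˢ Iic x, bvnPdf ρ p
      = ∫ p in Ioi x ×ˢ Ioi x, bvnPdf ρ p := by
    intro x
    have := bvn_rect hρsq x
    unfold stdCdf
    linarith
  have hbound_int : Integrable (fun p : ℝ × ℝ =>
      K * (rexp (-a * p.1 ^ 2) * rexp (-a * p.2 ^ 2))) := by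
    have : Integrable (fun p : ℝ × ℝ => K * (rexp (-a * p.1 ^ 2) * rexp (-a * p.2 ^ 2)))
        (volume.prod volume) :=
      ((integrable_exp_neg_mul_sq ha0).mul_prod (integrable_exp_neg_mul_sq ha0)).const_mul K
    rwa [← Measure.volume_eq_prod] at this
  have hprod : ∀ x : ℝ, ∫ p in Ioi x ×ˢ Ioi x, K * (rexp (-a * p.1 ^ 2) * rexp (-a * p.2 ^ 2))
      = K * ((∫ t in Ioi x, rexp (-a * t ^ 2)) * (∫ t in Ioi x, rexp (-a * t ^ 2))) := by
    intro x
    rw [integral_const_mul, Measure.volume_eq_prod]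
    congr 1
    exact setIntegral_prod_mul (fun t => rexp (-a * t ^ 2)) (fun t => rexp (-a * t ^ 2))
      (Ioi x) (Ioi x)
  -- numerator bounds
  have hnum_nonneg : ∀ x : ℝ, 0 ≤ ∫ p in Ioi x ×ˢ Ioi x, bvnPdf ρ p := fun x =>
    setIntegral_nonneg (measurableSet_Ioi.prod measurableSet_Ioi)
      (fun p _ => bvnPdf_nonneg ρ hρsq p)
  have hnum_le : ∀ x : ℝ, 0 < x → ∫ p in Ioi x ×ˢ Ioi x, bvnPdf ρ p
      ≤ K * (((a * x)⁻¹ * rexp (-a * x ^ 2)) * ((a * x)⁻¹ * rexp (-a * x ^ 2))) := by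
    intro x hx
    have h1 : ∫ p in Ioi x ×ˢ Ioi x, bvnPdf ρ p
        ≤ ∫ p in Ioi x ×ˢ Ioi x, K * (rexp (-a * p.1 ^ 2) * rexp (-a * p.2 ^ 2)) :=
      setIntegral_mono_on (integrable_bvnPdf hρsq).integrableOn hbound_int.integrableOn
        (measurableSet_Ioi.prod measurableSet_Ioi) (fun p _ => hle p)
    rw [hprod x] at h1
    refine h1.trans (mul_le_mul_of_nonneg_left ?_ hK0)
    have htail : ∫ t in Ioi x, rexp (-a * t ^ 2) ≤ (a * x)⁻¹ * rexp (-a * x ^ 2) :=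
      gauss_tail_upper ha0 hx
    have htail0 : 0 ≤ ∫ t in Ioi x, rexp (-a * t ^ 2) :=
      setIntegral_nonneg measurableSet_Ioi (fun t _ => (Real.exp_pos _).le)
    exact mul_le_mul htail htail htail0 (by positivity)
  -- denominator bounds
  have hden_pos : ∀ x : ℝ, 0 < 1 - stdCdf x := fun x => by
    have := stdCdf_lt_one x; linarith
  have hden_ge : ∀ x : ℝ, 0 ≤ x →
      (Real.sqrt (2 * π))⁻¹ * rexp (-((x+1) ^ 2) / 2) ≤ 1 - stdCdf x := by
    intro x hx
    rw [one_sub_stdCdf]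
    exact tail_lower x hx
  -- the explicit dominating function
  set C := K * (a⁻¹ * a⁻¹) * Real.sqrt (2 * π) with hC
  have hC0 : 0 ≤ C := by positivity
  have hub : ∀ x : ℝ, 1 ≤ x →
      (1 - 2 * stdCdf x + ∫ p in Iic x ×ˢ Iic x, bvnPdf ρ p) / (1 - stdCdf x)
        ≤ C * rexp (-(2 * a - 1/2) * x ^ 2 + x + 1/2) := by
    intro x hx
    have hx0 : 0 < x := by linarith
    rw [hnum_eq x]
    have step1 : (∫ p in Ioi x ×ˢ Ioi x, bvnPdf ρ p) / (1 - stdCdf x)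
        ≤ (K * (((a * x)⁻¹ * rexp (-a * x ^ 2)) * ((a * x)⁻¹ * rexp (-a * x ^ 2))))
          / ((Real.sqrt (2 * π))⁻¹ * rexp (-((x+1) ^ 2) / 2)) := by
      refine div_le_div₀ (by positivity) (hnum_le x hx0) (by positivity) (hden_ge x (by linarith))
    refine step1.trans ?_
    have hexp : rexp (-a * x ^ 2) * rexp (-a * x ^ 2) / rexp (-((x+1) ^ 2) / 2)
        = rexp (-(2 * a - 1/2) * x ^ 2 + x + 1/2) := by
      rw [← Real.exp_add, ← Real.exp_sub]
      congr 1
      ring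
    have hinvx : (a * x)⁻¹ ≤ a⁻¹ := by
      rw [mul_inv]
      nth_rewrite 2 [← mul_one a⁻¹]
      exact mul_le_mul_of_nonneg_left (by rw [inv_le_one_iff₀]; right; exact hx) (by positivity)
    calc K * (((a * x)⁻¹ * rexp (-a * x ^ 2)) * ((a * x)⁻¹ * rexp (-a * x ^ 2)))
          / ((Real.sqrt (2 * π))⁻¹ * rexp (-((x+1) ^ 2) / 2))
        = (K * ((a * x)⁻¹ * (a * x)⁻¹) * Real.sqrt (2 * π)) *
            (rexp (-a * x ^ 2) * rexp (-a * x ^ 2) / rexp (-((x+1) ^ 2) / 2)) := by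
          have hF : rexp (-((x+1) ^ 2) / 2) ≠ 0 := (Real.exp_pos _).ne'
          have hs : Real.sqrt (2 * π) ≠ 0 := by positivity
          field_simp
      _ = (K * ((a * x)⁻¹ * (a * x)⁻¹) * Real.sqrt (2 * π)) *
            rexp (-(2 * a - 1/2) * x ^ 2 + x + 1/2) := by rw [hexp]
      _ ≤ C * rexp (-(2 * a - 1/2) * x ^ 2 + x + 1/2) := by
          refine mul_le_mul_of_nonneg_right ?_ (Real.exp_pos _).le
          rw [hC]
          refine mul_le_mul_of_nonneg_right ?_ (Real.sqrt_nonneg _)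
          refine mul_le_mul_of_nonneg_left ?_ hK0
          have h0 : (0:ℝ) ≤ (a * x)⁻¹ := by positivity
          exact mul_le_mul hinvx hinvx h0 (by positivity)
  -- limit of the dominating function
  have hε : (0:ℝ) < 2 * a - 1/2 := by linarith
  have hq : Tendsto (fun x : ℝ => -(2 * a - 1/2) * x ^ 2 + x + 1/2) atTop atBot := by
    have hg : Tendsto (fun x : ℝ => 1 - x) atTop atBot := by
      have h := tendsto_atBot_add_const_left atTop (1:ℝ) (tendsto_neg_atTop_atBot (G := ℝ))
      exact h.congr (fun x => by ring)
    refine tendsto_atBot_mono' atTop ?_ hg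
    filter_upwards [eventually_ge_atTop (2 / (2 * a - 1/2))] with x hx
    have h2 : 2 ≤ (2 * a - 1/2) * x := by
      rw [div_le_iff₀ hε] at hx
      linarith [hx]
    have hx0 : 0 ≤ x := by nlinarith
    nlinarith [mul_le_mul_of_nonneg_right h2 hx0]
  have hlim : Tendsto (fun x : ℝ => C * rexp (-(2 * a - 1/2) * x ^ 2 + x + 1/2)) atTop (nhds 0) := by
    have := (Real.tendsto_exp_atBot.comp hq).const_mul C
    simpa using this
  refine tendsto_of_tendsto_of_tendsto_of_le_of_le' tendsto_const_nhds hlim ?_ ?_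
  · filter_upwards with x
    rw [hnum_eq x]
    exact div_nonneg (hnum_nonneg x) (hden_pos x).le
  · filter_upwards [eventually_ge_atTop (1:ℝ)] with x hx
    exact hub x hx

/-- the bivariate Gaussian copula with `ρ ∈ (−1,1)` is asymptotically
independent in the upper tail: `λ_u = lim_{q→1⁻} (1 − 2q + C_ρ(q,q))/(1 − q) = 0`;
equivalently `lim_{x→∞} 2(1 − Φ(x√(1−ρ)/√(1+ρ))) = 0`. -/
theorem gaussian_copula_no_upper_tail_dependence
    (ρ : ℝ) (hρ : ρ ∈ Ioo (-1:ℝ) 1)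
    (Φ Φinv : ℝ → ℝ) (Φ₂ : ℝ → ℝ → ℝ)
    -- standard normal distribution function and its inverse on (0,1)
    (hΦ : ∀ x, Φ x = ∫ t in Iic x,
        (Real.sqrt (2 * Real.pi))⁻¹ * Real.exp (-(t ^ 2) / 2))
    (hΦinv_left : ∀ x, Φinv (Φ x) = x)
    (hΦinv_right : ∀ p ∈ Ioo (0:ℝ) 1, Φ (Φinv p) = p)
    -- bivariate standard normal distribution function with correlation ρ
    (hΦ₂ : ∀ x y, Φ₂ x y =
        ∫ p in Iic x ×ˢ Iic y,
          (2 * Real.pi * Real.sqrt (1 - ρ ^ 2))⁻¹ *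
            Real.exp ((2 * ρ * p.1 * p.2 - p.1 ^ 2 - p.2 ^ 2) / (2 * (1 - ρ ^ 2)))) :
    -- upper tail dependence coefficient of C_ρ(u,v) = Φ₂(Φ⁻¹(u), Φ⁻¹(v)) is 0
    Tendsto (fun q : ℝ => (1 - 2 * q + Φ₂ (Φinv q) (Φinv q)) / (1 - q))
        (nhdsWithin 1 (Iio 1)) (nhds 0) ∧
    -- equivalently
    Tendsto (fun x : ℝ =>
        2 * (1 - Φ (x * Real.sqrt (1 - ρ) / Real.sqrt (1 + ρ))))
        atTop (nhds 0) := by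
  obtain ⟨hρ1, hρ2⟩ := hρ
  have hρsq : ρ ^ 2 < 1 := by nlinarith
  have hΦs : ∀ x, Φ x = stdCdf x := fun x => hΦ x
  have hΦ₂s : ∀ x y, Φ₂ x y = ∫ p in Iic x ×ˢ Iic y, bvnPdf ρ p := fun x y => hΦ₂ x y
  have habs : |ρ| < 1 := abs_lt_one_of_sq hρsq
  have habs2 : (0:ℝ) < 1 + |ρ| := by positivity
  -- part 2
  have hc : 0 < Real.sqrt (1 - ρ) / Real.sqrt (1 + ρ) :=
    div_pos (Real.sqrt_pos.2 (by linarith)) (Real.sqrt_pos.2 (by linarith))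
  have hxt : Tendsto (fun x : ℝ => x * Real.sqrt (1 - ρ) / Real.sqrt (1 + ρ)) atTop atTop := by
    have h := Tendsto.atTop_mul_const hc (tendsto_id (α := ℝ))
    exact h.congr fun x => (mul_div_assoc x _ _).symm
  have part2 : Tendsto (fun x : ℝ =>
      2 * (1 - Φ (x * Real.sqrt (1 - ρ) / Real.sqrt (1 + ρ)))) atTop (nhds 0) := by
    have h1 : Tendsto (fun x : ℝ => Φ (x * Real.sqrt (1 - ρ) / Real.sqrt (1 + ρ)))
        atTop (nhds 1) := by
      have h2 := stdCdf_tendsto_one.comp hxt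
      exact h2.congr fun x => (hΦs _).symm
    have h3 := ((tendsto_const_nhds (x := (1:ℝ)) (f := atTop)).sub h1).const_mul (2:ℝ)
    simpa using h3
  -- part 1
  have haε : (1:ℝ)/2 < 2 * (1/(2 * (1 + |ρ|))) := by
    have he : 2 * (1/(2 * (1 + |ρ|))) = 1/(1 + |ρ|) := by field_simp
    rw [he, div_lt_div_iff₀ (by norm_num) habs2]
    linarith
  have hkey := main_ratio (a := 1/(2 * (1 + |ρ|))) (K := (2 * π * Real.sqrt (1 - ρ ^ 2))⁻¹)
    hρsq (by positivity) (by positivity) (bvnPdf_le hρsq) haε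
  have hinv : Tendsto Φinv (nhdsWithin 1 (Iio 1)) atTop := by
    rw [tendsto_atTop]
    intro b
    have hb' : stdCdf (max b 0) < 1 := stdCdf_lt_one (max b 0)
    have hmem : Ioo (max (stdCdf (max b 0)) 0) 1 ∈ nhdsWithin 1 (Iio 1) :=
      Ioo_mem_nhdsLT_of_mem ⟨max_lt hb' one_pos, le_refl 1⟩
    filter_upwards [hmem] with q hq
    have hq01 : q ∈ Ioo (0:ℝ) 1 := ⟨lt_of_le_of_lt (le_max_right _ _) hq.1, hq.2⟩
    have hqb : stdCdf (max b 0) < q := lt_of_le_of_lt (le_max_left _ _) hq.1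
    have hqe : Φ (Φinv q) = q := hΦinv_right q hq01
    by_contra hlt
    push_neg at hlt
    have h5 : stdCdf (Φinv q) ≤ stdCdf (max b 0) :=
      stdCdf_mono (le_trans hlt.le (le_max_left b 0))
    rw [← hΦs, hqe] at h5
    linarith
  have heq : ∀ᶠ q in nhdsWithin 1 (Iio 1),
      ((fun x => (1 - 2 * stdCdf x + ∫ p in Iic x ×ˢ Iic x, bvnPdf ρ p) / (1 - stdCdf x))
        ∘ Φinv) q = (1 - 2 * q + Φ₂ (Φinv q) (Φinv q)) / (1 - q) := by
    have hmem : Ioo (0:ℝ) 1 ∈ nhdsWithin 1 (Iio 1) :=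
      Ioo_mem_nhdsLT_of_mem ⟨one_pos, le_refl 1⟩
    filter_upwards [hmem] with q hq
    have hqe : Φ (Φinv q) = q := hΦinv_right q hq
    simp only [Function.comp]
    rw [hΦ₂s, ← hΦs, hqe]
  exact ⟨((hkey.comp hinv).congr' heq), part2⟩
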